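/- Given A ∈ ℝ^{n×n}, Y ∈ ℝ^{n×n}, C ∈ ℝ^{p×n} and L ∈ ℝ^{n×p} such that A − LC and Y have the same characteristic polynomial, if the pairs (A − LC, χ₁) and (Y, χ₂) are observable for some row vectors χ₁, χ₂ ∈ ℝ^{1×n}, then there exists an invertible matrix S ∈ ℝ^{n×n} with Y = S(A − LC)S⁻¹. -/

import Mathlib

open Matrix Polynomial

/-- The pair `(M, χ)` is observable if the observability matrix with rows
`χ, χM, …, χM^(n-1)` has full rank `n`. -/
def Observable {n : ℕ} (M : Matrix (Fin n) (Fin n) ℝ) (χ : Matrix (Fin 1) (Fin n) ℝ) : Prop :=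
  (Matrix.of (fun (i : Fin n) (j : Fin n) => (χ * M ^ (i : ℕ)) 0 j)).rank = n

noncomputable def obsMat {n : ℕ} (M : Matrix (Fin n) (Fin n) ℝ) (χ : Matrix (Fin 1) (Fin n) ℝ) :
    Matrix (Fin n) (Fin n) ℝ :=
  Matrix.of (fun (i : Fin n) (j : Fin n) => (χ * M ^ (i : ℕ)) 0 j)

noncomputable def compK (n : ℕ) (p : Polynomial ℝ) : Matrix (Fin n) (Fin n) ℝ :=
  Matrix.of (fun i j => if h : (i : ℕ) + 1 < n then (if j = (⟨(i : ℕ) + 1, h⟩ : Fin n) then 1 else 0)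
    else -(p.coeff (j : ℕ)))

lemma rank_full_isUnit {n : ℕ} (M : Matrix (Fin n) (Fin n) ℝ) (h : M.rank = n) :
    IsUnit M.det := by
  rw [isUnit_iff_ne_zero]
  intro hdet
  obtain ⟨v, hv, hMv⟩ := (Matrix.exists_mulVec_eq_zero_iff).2 hdet
  have hker : v ∈ LinearMap.ker M.mulVecLin := by simpa using hMv
  have hrn := LinearMap.finrank_range_add_finrank_ker M.mulVecLin
  have hfr : Module.finrank ℝ (Fin n → ℝ) = n := by simp
  rw [hfr] at hrn
  have hk0 : Module.finrank ℝ (LinearMap.ker M.mulVecLin) = 0 := by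
    have : M.rank = Module.finrank ℝ (LinearMap.range M.mulVecLin) := rfl
    omega
  rw [Submodule.finrank_eq_zero] at hk0
  exact hv (by simpa [hk0] using hker)

lemma key_eq {n : ℕ} (M : Matrix (Fin n) (Fin n) ℝ) (χ : Matrix (Fin 1) (Fin n) ℝ) :
    obsMat M χ * M = compK n M.charpoly * obsMat M χ := by
  ext i j
  have hlhs : (obsMat M χ * M) i j = (χ * M ^ ((i : ℕ) + 1)) 0 j := by
    have : (obsMat M χ * M) i j = ((χ * M ^ (i : ℕ)) * M) 0 j := by
      simp [obsMat, Matrix.mul_apply]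
    rw [this, Matrix.mul_assoc, ← pow_succ]
  rw [hlhs]
  by_cases h : (i : ℕ) + 1 < n
  · conv_rhs => rw [Matrix.mul_apply]
    simp only [compK, of_apply, dif_pos h, ite_mul, one_mul, zero_mul]
    rw [Finset.sum_ite_eq' Finset.univ]
    simp [obsMat]
  · have hin : (i : ℕ) + 1 = n := by omega
    have hch := Matrix.aeval_self_charpoly M
    have hdeg : M.charpoly.natDegree = n := by
      simp [Matrix.charpoly_natDegree_eq_dim]
    have hsum : (0 : Matrix (Fin n) (Fin n) ℝ) =
        ∑ k ∈ Finset.range (n + 1), M.charpoly.coeff k • M ^ k := by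
      rw [← hch, aeval_eq_sum_range' (by omega : M.charpoly.natDegree < n + 1)]
    have hlead : M.charpoly.coeff n = 1 := by
      have := (Matrix.charpoly_monic M).leadingCoeff
      rwa [Polynomial.leadingCoeff, hdeg] at this
    rw [Finset.sum_range_succ, hlead, one_smul] at hsum
    have hMn : M ^ n = -∑ k ∈ Finset.range n, M.charpoly.coeff k • M ^ k :=
      eq_neg_of_add_eq_zero_left (by rw [add_comm] at hsum; exact hsum.symm)
    rw [hin, hMn, Matrix.mul_neg, Matrix.mul_sum, Matrix.mul_apply]
    simp only [compK, of_apply, dif_neg h, obsMat, Matrix.neg_apply, Matrix.sum_apply,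
      Matrix.mul_smul, Matrix.smul_apply, smul_eq_mul, neg_mul]
    rw [← Finset.sum_neg_distrib, ← Fin.sum_univ_eq_sum_range
      (fun k => -(M.charpoly.coeff k * (χ * M ^ k) 0 j))]

theorem stmt6 {n p : ℕ} (A Y : Matrix (Fin n) (Fin n) ℝ) (C : Matrix (Fin p) (Fin n) ℝ)
    (L : Matrix (Fin n) (Fin p) ℝ) (χ₁ χ₂ : Matrix (Fin 1) (Fin n) ℝ)
    (hchar : (A - L * C).charpoly = Y.charpoly)
    (hobs1 : Observable (A - L * C) χ₁) (hobs2 : Observable Y χ₂) :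
    ∃ S : Matrix (Fin n) (Fin n) ℝ, IsUnit S.det ∧ Y = S * (A - L * C) * S⁻¹ := by
  set M := A - L * C with hM
  have hO1 : IsUnit (obsMat M χ₁).det := rank_full_isUnit _ hobs1
  have hO2 : IsUnit (obsMat Y χ₂).det := rank_full_isUnit _ hobs2
  set O1 := obsMat M χ₁ with hO1d
  set O2 := obsMat Y χ₂ with hO2d
  have h1 : O1 * M = compK n M.charpoly * O1 := key_eq M χ₁
  have h2 : O2 * Y = compK n M.charpoly * O2 := by rw [hchar]; exact key_eq Y χ₂
  refine ⟨O2⁻¹ * O1, ?_, ?_⟩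
  · rw [Matrix.det_mul]
    exact (Matrix.isUnit_nonsing_inv_det O2 hO2).mul hO1
  · have hSinv : (O2⁻¹ * O1)⁻¹ = O1⁻¹ * O2 := by
      rw [Matrix.mul_inv_rev, Matrix.nonsing_inv_nonsing_inv O2 hO2]
    rw [hSinv]
    have hK : O1 * M * O1⁻¹ = compK n M.charpoly := by
      rw [h1, Matrix.mul_assoc, Matrix.mul_nonsing_inv O1 hO1, Matrix.mul_one]
    calc Y = O2⁻¹ * (O2 * Y) := by
            rw [← Matrix.mul_assoc, Matrix.nonsing_inv_mul O2 hO2, Matrix.one_mul]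
      _ = O2⁻¹ * (O1 * M * O1⁻¹ * O2) := by rw [h2, hK]
      _ = O2⁻¹ * O1 * M * (O1⁻¹ * O2) := by
            simp only [Matrix.mul_assoc]
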